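/- Let Δx, Δy > 0 and let βx, βy : ℤ×ℤ → ℝ be arbitrary (they represent the components of the anisotropy field b at the primal grid nodes, the node of index (i,j) corresponding to the point (x_{i−1/2}, y_{j−1/2})). For Ψ : ℤ×ℤ → ℝ define the discrete directional gradient G(Ψ)(i,j) = βx(i,j)·[ (Ψ(i,j) − Ψ(i−1,j))/(2Δx) + (Ψ(i,j−1) − Ψ(i−1,j−1))/(2Δx) ] + βy(i,j)·[ (Ψ(i,j) − Ψ(i,j−1))/(2Δy) + (Ψ(i−1,j) − Ψ(i−1,j−1))/(2Δy) ]. For Φ : ℤ×ℤ → ℝ define the discrete divergence D(Φ)(i,j) = (βx(i+1,j)/(2Δx) − βy(i+1,j)/(2Δy))·Φ(i+1,j) + (βx(i+1,j+1)/(2Δx) + βy(i+1,j+1)/(2Δy))·Φ(i+1,j+1) − (βx(i,j)/(2Δx) + βy(i,j)/(2Δy))·Φ(i,j) − (βx(i,j+1)/(2Δx) − βy(i,j+1)/(2Δy))·Φ(i,j+1). Then for all finitely supported Ψ, Φ : ℤ×ℤ → ℝ, the discrete Green formula holds: Σ_{(i,j)∈ℤ²} D(Φ)(i,j)·Ψ(i,j)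 = − Σ_{(i,j)∈ℤ²} Φ(i,j)·G(Ψ)(i,j). -/

import Mathlib

/-- Discrete Green formula (the paper's Proposition 3.2): the finite-volume approximations
`G = (b·∇)_app` (mapping dual-grid functions to primal-grid functions) and
`D = ∇·(b ·)_app` (mapping primal-grid functions to dual-grid functions) are adjoint to
each other: `Σ D(Φ)·Ψ = - Σ Φ·G(Ψ)` for all finitely supported grid functions `Ψ, Φ`. -/
theorem statement16
    (Δx Δy : ℝ) (hΔx : 0 < Δx) (hΔy : 0 < Δy)
    (βx βy : ℤ × ℤ → ℝ)
    (G D : (ℤ × ℤ → ℝ) → (ℤ × ℤ → ℝ))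
    (hG : ∀ (Ψ : ℤ × ℤ → ℝ) (i j : ℤ),
      G Ψ (i, j) = βx (i, j) *
          ((Ψ (i, j) - Ψ (i - 1, j)) / (2 * Δx) + (Ψ (i, j - 1) - Ψ (i - 1, j - 1)) / (2 * Δx))
        + βy (i, j) *
          ((Ψ (i, j) - Ψ (i, j - 1)) / (2 * Δy) + (Ψ (i - 1, j) - Ψ (i - 1, j - 1)) / (2 * Δy)))
    (hD : ∀ (Φ : ℤ × ℤ → ℝ) (i j : ℤ),
      D Φ (i, j) = (βx (i + 1, j) / (2 * Δx) - βy (i + 1, j) / (2 * Δy)) * Φ (i + 1, j)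
        + (βx (i + 1, j + 1) / (2 * Δx) + βy (i + 1, j + 1) / (2 * Δy)) * Φ (i + 1, j + 1)
        - (βx (i, j) / (2 * Δx) + βy (i, j) / (2 * Δy)) * Φ (i, j)
        - (βx (i, j + 1) / (2 * Δx) - βy (i, j + 1) / (2 * Δy)) * Φ (i, j + 1)) :
    ∀ Ψ Φ : ℤ × ℤ → ℝ,
      (Function.support Ψ).Finite → (Function.support Φ).Finite →
      ∑ᶠ ij : ℤ × ℤ, D Φ ij * Ψ ij = -∑ᶠ ij : ℤ × ℤ, Φ ij * G Ψ ij := by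
  intro Ψ Φ hΨ hΦ
  classical
  -- coefficient functions
  set p : ℤ × ℤ → ℝ := fun ij => βx ij / (2 * Δx) + βy ij / (2 * Δy) with hp
  set q : ℤ × ℤ → ℝ := fun ij => βx ij / (2 * Δx) - βy ij / (2 * Δy) with hq
  set A : ℤ × ℤ → ℝ := fun ij => q ij * Φ ij * Ψ (ij.1 - 1, ij.2) with hA
  set B : ℤ × ℤ → ℝ := fun ij => p ij * Φ ij * Ψ (ij.1 - 1, ij.2 - 1) with hB
  set C : ℤ × ℤ → ℝ := fun ij => p ij * Φ ij * Ψ ij with hC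
  set E : ℤ × ℤ → ℝ := fun ij => q ij * Φ ij * Ψ (ij.1, ij.2 - 1) with hE
  have hsub : ∀ f : ℤ × ℤ → ℝ, (∀ ij, Φ ij = 0 → f ij = 0) →
      (Function.support f).Finite := by
    intro f hf
    refine hΦ.subset fun ij hij => ?_
    simp only [Function.mem_support] at hij ⊢
    exact fun h => hij (hf ij h)
  have hAf : (Function.support A).Finite := hsub A (by intro ij h; simp [hA, h])
  have hBf : (Function.support B).Finite := hsub B (by intro ij h; simp [hB, h])
  have hCf : (Function.support C).Finite := hsub C (by intro ij h; simp [hC, h])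
  have hEf : (Function.support E).Finite := hsub E (by intro ij h; simp [hE, h])
  -- translations
  have hshift : ∀ (f : ℤ × ℤ → ℝ) (a b : ℤ),
      ∑ᶠ ij : ℤ × ℤ, f (ij.1 + a, ij.2 + b) = ∑ᶠ ij : ℤ × ℤ, f ij := by
    intro f a b
    have := finsum_comp_equiv (Equiv.addRight ((a, b) : ℤ × ℤ)) (f := f)
    exact this
  have hshiftf : ∀ (f : ℤ × ℤ → ℝ) (a b : ℤ), (Function.support f).Finite →
      (Function.support fun ij : ℤ × ℤ => f (ij.1 + a, ij.2 + b)).Finite := by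
    intro f a b hf
    have : (Function.support fun ij : ℤ × ℤ => f (ij.1 + a, ij.2 + b)) =
        (fun ij : ℤ × ℤ => (ij.1 + a, ij.2 + b)) ⁻¹' Function.support f := by
      ext ij; simp [Function.mem_support]
    rw [this]
    exact hf.preimage (fun x _ y _ h => by
      simpa [Prod.ext_iff] using h)
  -- pointwise identities
  have hGpt : ∀ ij : ℤ × ℤ, Φ ij * G Ψ ij = C ij + E ij - A ij - B ij := by
    rintro ⟨i, j⟩
    rw [hG]
    simp only [hA, hB, hC, hE, hp, hq]
    ring
  have hDpt : ∀ ij : ℤ × ℤ, D Φ ij * Ψ ij =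
      A (ij.1 + 1, ij.2) + B (ij.1 + 1, ij.2 + 1) - C ij - E (ij.1, ij.2 + 1) := by
    rintro ⟨i, j⟩
    rw [hD]
    simp only [hA, hB, hC, hE, hp, hq, add_sub_cancel_right]
    ring
  have hA' : (Function.support fun ij : ℤ × ℤ => A (ij.1 + 1, ij.2)).Finite := by
    simpa using hshiftf A 1 0 hAf
  have hB' : (Function.support fun ij : ℤ × ℤ => B (ij.1 + 1, ij.2 + 1)).Finite :=
    hshiftf B 1 1 hBf
  have hE' : (Function.support fun ij : ℤ × ℤ => E (ij.1, ij.2 + 1)).Finite := by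
    simpa using hshiftf E 0 1 hEf
  have hS2 : (Function.support fun ij : ℤ × ℤ =>
      A (ij.1 + 1, ij.2) + B (ij.1 + 1, ij.2 + 1)).Finite :=
    (hA'.union hB').subset (Function.support_add _ _)
  have hS1 : (Function.support fun ij : ℤ × ℤ =>
      A (ij.1 + 1, ij.2) + B (ij.1 + 1, ij.2 + 1) - C ij).Finite :=
    (hS2.union hCf).subset (Function.support_sub _ _)
  have hT2 : (Function.support fun ij : ℤ × ℤ => C ij + E ij).Finite :=
    (hCf.union hEf).subset (Function.support_add _ _)
  have hT1 : (Function.support fun ij : ℤ × ℤ => C ij + E ij - A ij).Finite :=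
    (hT2.union hAf).subset (Function.support_sub _ _)
  calc ∑ᶠ ij : ℤ × ℤ, D Φ ij * Ψ ij
      = ∑ᶠ ij : ℤ × ℤ, (A (ij.1 + 1, ij.2) + B (ij.1 + 1, ij.2 + 1) - C ij
          - E (ij.1, ij.2 + 1)) := finsum_congr hDpt
    _ = ((∑ᶠ ij : ℤ × ℤ, A (ij.1 + 1, ij.2)) + ∑ᶠ ij : ℤ × ℤ, B (ij.1 + 1, ij.2 + 1))
          - (∑ᶠ ij : ℤ × ℤ, C ij) - ∑ᶠ ij : ℤ × ℤ, E (ij.1, ij.2 + 1) := by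
        rw [finsum_sub_distrib hS1 hE', finsum_sub_distrib hS2 hCf,
          finsum_add_distrib hA' hB']
    _ = ((∑ᶠ ij : ℤ × ℤ, A ij) + ∑ᶠ ij : ℤ × ℤ, B ij)
          - (∑ᶠ ij : ℤ × ℤ, C ij) - ∑ᶠ ij : ℤ × ℤ, E ij := by
        have h1 := hshift A 1 0
        have h2 := hshift B 1 1
        have h3 := hshift E 0 1
        simp only [add_zero] at h1 h3
        rw [h1, h2, h3]
    _ = -∑ᶠ ij : ℤ × ℤ, Φ ij * G Ψ ij := by
        rw [finsum_congr hGpt, finsum_sub_distrib hT1 hBf, finsum_sub_distrib hT2 hAf,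
          finsum_add_distrib hCf hEf]
        ring
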